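/- arXiv:1710.07708 — 2 statements merged into one kernel-verified Lean document; each statement's English description precedes it below -/
import Mathlib

section
/- Let $Q$ be the rotation of $\mathbb{R}^2$ by $2\pi/3$. The space of totally symmetric 3-tensors $A \in (\mathbb{R}^2)^{\otimes 3}$ satisfying $Q^{\otimes 3}A = A$ is two-dimensional, spanned by $E_{111} - 3\,\mathrm{sym}\,E_{122}$ and $E_{222} - 3\,\mathrm{sym}\,E_{112}$, where $E_{ijk} = e_i\otimes e_j\otimes e_k$. -/
open Finset Matrix

noncomputable def Qtri : Matrix (Fin 2) (Fin 2) ℝ :=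
  !![-(1/2 : ℝ), -(Real.sqrt 3 / 2); Real.sqrt 3 / 2, -(1/2 : ℝ)]

noncomputable def tpow3 (B : Matrix (Fin 2) (Fin 2) ℝ)
    (A : (Fin 3 → Fin 2) → ℝ) : (Fin 3 → Fin 2) → ℝ :=
  fun l => ∑ k : Fin 3 → Fin 2, A k * ∏ i, B (l i) (k i)

noncomputable def sym3 (A : (Fin 3 → Fin 2) → ℝ) : (Fin 3 → Fin 2) → ℝ :=
  fun l => ((Nat.factorial 3 : ℝ))⁻¹ * ∑ φ : Equiv.Perm (Fin 3), A (l ∘ φ)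

def E3 (i j k : Fin 2) : (Fin 3 → Fin 2) → ℝ :=
  fun l => if l 0 = i ∧ l 1 = j ∧ l 2 = k then 1 else 0

noncomputable def T1 : (Fin 3 → Fin 2) → ℝ := E3 0 0 0 - (3 : ℝ) • sym3 (E3 0 1 1)

noncomputable def T2 : (Fin 3 → Fin 2) → ℝ := E3 1 1 1 - (3 : ℝ) • sym3 (E3 0 0 1)

lemma sum8 (f : (Fin 3 → Fin 2) → ℝ) : ∑ k : Fin 3 → Fin 2, f k =
    f ![0,0,0] + f ![0,0,1] + f ![0,1,0] + f ![0,1,1] + f ![1,0,0] + f ![1,0,1] + f ![1,1,0] + f ![1,1,1] := by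
  rw [show (Finset.univ : Finset (Fin 3 → Fin 2)) =
    {![0,0,0], ![0,0,1], ![0,1,0], ![0,1,1], ![1,0,0], ![1,0,1], ![1,1,0], ![1,1,1]} from by decide]
  repeat rw [Finset.sum_insert (by decide)]
  rw [Finset.sum_singleton]; ring

lemma Q00 : Qtri 0 0 = -(1/2) := by simp [Qtri]
lemma Q01 : Qtri 0 1 = -(Real.sqrt 3/2) := by simp [Qtri]
lemma Q10 : Qtri 1 0 = Real.sqrt 3/2 := by simp [Qtri]
lemma Q11 : Qtri 1 1 = -(1/2) := by simp [Qtri]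

lemma tpow3_apply (B : Matrix (Fin 2) (Fin 2) ℝ) (A : (Fin 3 → Fin 2) → ℝ) (l : Fin 3 → Fin 2) :
    tpow3 B A l =
      A ![0,0,0] * (B (l 0) 0 * B (l 1) 0 * B (l 2) 0) +
      A ![0,0,1] * (B (l 0) 0 * B (l 1) 0 * B (l 2) 1) +
      A ![0,1,0] * (B (l 0) 0 * B (l 1) 1 * B (l 2) 0) +
      A ![0,1,1] * (B (l 0) 0 * B (l 1) 1 * B (l 2) 1) +
      A ![1,0,0] * (B (l 0) 1 * B (l 1) 0 * B (l 2) 0) +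
      A ![1,0,1] * (B (l 0) 1 * B (l 1) 0 * B (l 2) 1) +
      A ![1,1,0] * (B (l 0) 1 * B (l 1) 1 * B (l 2) 0) +
      A ![1,1,1] * (B (l 0) 1 * B (l 1) 1 * B (l 2) 1) := by
  unfold tpow3
  rw [sum8 (fun k => A k * ∏ i, B (l i) (k i))]
  simp [Fin.prod_univ_three]

lemma sym3_E3_eval (i j k : Fin 2) (l : Fin 3 → Fin 2) (n : ℕ)
    (h : (Finset.univ.filter
      (fun φ : Equiv.Perm (Fin 3) => l (φ 0) = i ∧ l (φ 1) = j ∧ l (φ 2) = k)).card = n) :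
    sym3 (E3 i j k) l = (n : ℝ) / 6 := by
  unfold sym3 E3
  rw [Finset.sum_boole]
  simp only [Function.comp] at h ⊢
  rw [h]
  simp [Nat.factorial]; ring

lemma T1v0 : T1 ![0,0,0] = 1 := by
  unfold T1; rw [Pi.sub_apply, Pi.smul_apply, smul_eq_mul, sym3_E3_eval 0 1 1 _ 0 (by decide)]
  norm_num [E3]
  decide
lemma T1v1 : T1 ![0,0,1] = 0 := by
  unfold T1; rw [Pi.sub_apply, Pi.smul_apply, smul_eq_mul, sym3_E3_eval 0 1 1 _ 0 (by decide)]
  norm_num [E3]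
  decide
lemma T1v2 : T1 ![0,1,0] = 0 := by
  unfold T1; rw [Pi.sub_apply, Pi.smul_apply, smul_eq_mul, sym3_E3_eval 0 1 1 _ 0 (by decide)]
  norm_num [E3]
lemma T1v3 : T1 ![0,1,1] = -1 := by
  unfold T1; rw [Pi.sub_apply, Pi.smul_apply, smul_eq_mul, sym3_E3_eval 0 1 1 _ 2 (by decide)]
  norm_num [E3]
lemma T1v4 : T1 ![1,0,0] = 0 := by
  unfold T1; rw [Pi.sub_apply, Pi.smul_apply, smul_eq_mul, sym3_E3_eval 0 1 1 _ 0 (by decide)]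
  norm_num [E3]
lemma T1v5 : T1 ![1,0,1] = -1 := by
  unfold T1; rw [Pi.sub_apply, Pi.smul_apply, smul_eq_mul, sym3_E3_eval 0 1 1 _ 2 (by decide)]
  norm_num [E3]
lemma T1v6 : T1 ![1,1,0] = -1 := by
  unfold T1; rw [Pi.sub_apply, Pi.smul_apply, smul_eq_mul, sym3_E3_eval 0 1 1 _ 2 (by decide)]
  norm_num [E3]
lemma T1v7 : T1 ![1,1,1] = 0 := by
  unfold T1; rw [Pi.sub_apply, Pi.smul_apply, smul_eq_mul, sym3_E3_eval 0 1 1 _ 0 (by decide)]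
  norm_num [E3]

lemma T2v0 : T2 ![0,0,0] = 0 := by
  unfold T2; rw [Pi.sub_apply, Pi.smul_apply, smul_eq_mul, sym3_E3_eval 0 0 1 _ 0 (by decide)]
  norm_num [E3]
lemma T2v1 : T2 ![0,0,1] = -1 := by
  unfold T2; rw [Pi.sub_apply, Pi.smul_apply, smul_eq_mul, sym3_E3_eval 0 0 1 _ 2 (by decide)]
  norm_num [E3]
lemma T2v2 : T2 ![0,1,0] = -1 := by
  unfold T2; rw [Pi.sub_apply, Pi.smul_apply, smul_eq_mul, sym3_E3_eval 0 0 1 _ 2 (by decide)]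
  norm_num [E3]
lemma T2v3 : T2 ![0,1,1] = 0 := by
  unfold T2; rw [Pi.sub_apply, Pi.smul_apply, smul_eq_mul, sym3_E3_eval 0 0 1 _ 0 (by decide)]
  norm_num [E3]
lemma T2v4 : T2 ![1,0,0] = -1 := by
  unfold T2; rw [Pi.sub_apply, Pi.smul_apply, smul_eq_mul, sym3_E3_eval 0 0 1 _ 2 (by decide)]
  norm_num [E3]
lemma T2v5 : T2 ![1,0,1] = 0 := by
  unfold T2; rw [Pi.sub_apply, Pi.smul_apply, smul_eq_mul, sym3_E3_eval 0 0 1 _ 0 (by decide)]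
  norm_num [E3]
lemma T2v6 : T2 ![1,1,0] = 0 := by
  unfold T2; rw [Pi.sub_apply, Pi.smul_apply, smul_eq_mul, sym3_E3_eval 0 0 1 _ 0 (by decide)]
  norm_num [E3]
  decide
lemma T2v7 : T2 ![1,1,1] = 1 := by
  unfold T2; rw [Pi.sub_apply, Pi.smul_apply, smul_eq_mul, sym3_E3_eval 0 0 1 _ 0 (by decide)]
  norm_num [E3]
  decide

lemma sym3_comp (A : (Fin 3 → Fin 2) → ℝ) (ψ : Equiv.Perm (Fin 3)) (l : Fin 3 → Fin 2) :
    sym3 A (l ∘ ψ) = sym3 A l := by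
  unfold sym3
  congr 1
  calc ∑ φ : Equiv.Perm (Fin 3), A ((l ∘ ψ) ∘ φ)
      = ∑ φ : Equiv.Perm (Fin 3), A (l ∘ (Equiv.mulLeft ψ φ)) := by
        apply Finset.sum_congr rfl; intro φ _; congr 1
    _ = ∑ φ : Equiv.Perm (Fin 3), A (l ∘ φ) :=
        Equiv.sum_comp (Equiv.mulLeft ψ) (fun φ => A (l ∘ φ))

lemma E3_diag_comp (i : Fin 2) (ψ : Equiv.Perm (Fin 3)) (l : Fin 3 → Fin 2) :
    E3 i i i (l ∘ ψ) = E3 i i i l := by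
  unfold E3
  have key : ∀ (m : Fin 3 → Fin 2), (m 0 = i ∧ m 1 = i ∧ m 2 = i) ↔ ∀ j, m j = i := by
    intro m
    constructor
    · rintro ⟨h0, h1, h2⟩ j; fin_cases j <;> assumption
    · intro h; exact ⟨h 0, h 1, h 2⟩
  simp only [Function.comp]
  have hiff : (l (ψ 0) = i ∧ l (ψ 1) = i ∧ l (ψ 2) = i) ↔ (l 0 = i ∧ l 1 = i ∧ l 2 = i) := by
    rw [show (l (ψ 0) = i ∧ l (ψ 1) = i ∧ l (ψ 2) = i) ↔ ∀ j, l (ψ j) = i from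
      ⟨fun ⟨h0,h1,h2⟩ j => by fin_cases j <;> assumption, fun h => ⟨h 0, h 1, h 2⟩⟩, key l]
    constructor
    · intro h j
      have := h (ψ.symm j)
      simpa using this
    · intro h j; exact h (ψ j)
  exact if_congr hiff rfl rfl

lemma sym3_of_inv (X : (Fin 3 → Fin 2) → ℝ) (h : ∀ (ψ : Equiv.Perm (Fin 3)) l, X (l ∘ ψ) = X l) :
    sym3 X = X := by
  funext l
  unfold sym3
  rw [Finset.sum_congr rfl (fun φ _ => h φ l), Finset.sum_const]
  simp only [Finset.card_univ, Fintype.card_perm, Fintype.card_fin, nsmul_eq_mul, Nat.factorial]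
  ring

lemma T1_inv (ψ : Equiv.Perm (Fin 3)) (l : Fin 3 → Fin 2) : T1 (l ∘ ψ) = T1 l := by
  unfold T1
  rw [Pi.sub_apply, Pi.sub_apply, Pi.smul_apply, Pi.smul_apply, E3_diag_comp, sym3_comp]

lemma T2_inv (ψ : Equiv.Perm (Fin 3)) (l : Fin 3 → Fin 2) : T2 (l ∘ ψ) = T2 l := by
  unfold T2
  rw [Pi.sub_apply, Pi.sub_apply, Pi.smul_apply, Pi.smul_apply, E3_diag_comp, sym3_comp]

lemma sym3_T1 : sym3 T1 = T1 := sym3_of_inv T1 T1_inv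
lemma sym3_T2 : sym3 T2 = T2 := sym3_of_inv T2 T2_inv

lemma tpow3_T1 : tpow3 Qtri T1 = T1 := by
  funext l
  have hl : l = ![l 0, l 1, l 2] := by funext i; fin_cases i <;> rfl
  have hs : Real.sqrt 3 * Real.sqrt 3 = 3 := Real.mul_self_sqrt (by norm_num)
  rcases show l 0 = 0 ∨ l 0 = 1 from by omega with h0|h0 <;>
  rcases show l 1 = 0 ∨ l 1 = 1 from by omega with h1|h1 <;>
  rcases show l 2 = 0 ∨ l 2 = 1 from by omega with h2|h2 <;>
  rw [h0, h1, h2] at hl <;> rw [hl, tpow3_apply] <;>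
  simp only [Matrix.cons_val_zero, Matrix.cons_val_one, Matrix.head_cons, Matrix.cons_val_two,
    Matrix.tail_cons, Q00, Q01, Q10, Q11, T1v0, T1v1, T1v2, T1v3, T1v4, T1v5, T1v6, T1v7]
  all_goals first
  | linear_combination ((3:ℝ)/8) * hs
  | linear_combination (-(3:ℝ)/8) * hs
  | linear_combination (Real.sqrt 3/8) * hs
  | linear_combination (-(Real.sqrt 3)/8) * hs

lemma tpow3_T2 : tpow3 Qtri T2 = T2 := by
  funext l
  have hl : l = ![l 0, l 1, l 2] := by funext i; fin_cases i <;> rfl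
  have hs : Real.sqrt 3 * Real.sqrt 3 = 3 := Real.mul_self_sqrt (by norm_num)
  rcases show l 0 = 0 ∨ l 0 = 1 from by omega with h0|h0 <;>
  rcases show l 1 = 0 ∨ l 1 = 1 from by omega with h1|h1 <;>
  rcases show l 2 = 0 ∨ l 2 = 1 from by omega with h2|h2 <;>
  rw [h0, h1, h2] at hl <;> rw [hl, tpow3_apply] <;>
  simp only [Matrix.cons_val_zero, Matrix.cons_val_one, Matrix.head_cons, Matrix.cons_val_two,
    Matrix.tail_cons, Q00, Q01, Q10, Q11, T2v0, T2v1, T2v2, T2v3, T2v4, T2v5, T2v6, T2v7]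
  all_goals first
  | linear_combination ((3:ℝ)/8) * hs
  | linear_combination (-(3:ℝ)/8) * hs
  | linear_combination (Real.sqrt 3/8) * hs
  | linear_combination (-(Real.sqrt 3)/8) * hs

lemma tpow3_lin (B : Matrix (Fin 2) (Fin 2) ℝ) (c d : ℝ) (X Y : (Fin 3 → Fin 2) → ℝ) :
    tpow3 B (c • X + d • Y) = c • tpow3 B X + d • tpow3 B Y := by
  funext l
  unfold tpow3
  simp only [Pi.add_apply, Pi.smul_apply, smul_eq_mul, add_mul, Finset.sum_add_distrib,
    Finset.mul_sum, mul_assoc]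

lemma sym3_lin (c d : ℝ) (X Y : (Fin 3 → Fin 2) → ℝ) :
    sym3 (c • X + d • Y) = c • sym3 X + d • sym3 Y := by
  funext l
  unfold sym3
  simp only [Pi.add_apply, Pi.smul_apply, smul_eq_mul]
  rw [Finset.sum_add_distrib, ← Finset.mul_sum, ← Finset.mul_sum]
  ring

theorem stmt2 :
    {A : (Fin 3 → Fin 2) → ℝ | tpow3 Qtri A = A ∧ sym3 A = A}
      = (Submodule.span ℝ {T1, T2} : Submodule ℝ ((Fin 3 → Fin 2) → ℝ)) ∧
    LinearIndependent ℝ ![T1, T2] := by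
  constructor
  · ext A
    simp only [Set.mem_setOf_eq, SetLike.mem_coe, Submodule.mem_span_pair]
    constructor
    · rintro ⟨hQ, hS⟩
      have hsymm : ∀ (ψ : Equiv.Perm (Fin 3)) (l : Fin 3 → Fin 2), A (l ∘ ψ) = A l := by
        intro ψ l
        have h := sym3_comp A ψ l
        rw [hS] at h
        exact h
      have s010 : A ![0,1,0] = A ![(0:Fin 2),0,1] := by
        have h := hsymm (Equiv.swap (1 : Fin 3) 2) ![(0:Fin 2),0,1]
        have e : ![(0:Fin 2),0,1] ∘ ⇑(Equiv.swap (1 : Fin 3) 2) = ![0,1,0] := by decide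
        rw [e] at h
        exact h
      have s100 : A ![1,0,0] = A ![(0:Fin 2),0,1] := by
        have h := hsymm (Equiv.swap (0 : Fin 3) 2) ![(0:Fin 2),0,1]
        have e : ![(0:Fin 2),0,1] ∘ ⇑(Equiv.swap (0 : Fin 3) 2) = ![1,0,0] := by decide
        rw [e] at h
        exact h
      have s101 : A ![1,0,1] = A ![(0:Fin 2),1,1] := by
        have h := hsymm (Equiv.swap (0 : Fin 3) 1) ![(0:Fin 2),1,1]
        have e : ![(0:Fin 2),1,1] ∘ ⇑(Equiv.swap (0 : Fin 3) 1) = ![1,0,1] := by decide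
        rw [e] at h
        exact h
      have s110 : A ![1,1,0] = A ![(0:Fin 2),1,1] := by
        have h := hsymm (Equiv.swap (0 : Fin 3) 2) ![(0:Fin 2),1,1]
        have e : ![(0:Fin 2),1,1] ∘ ⇑(Equiv.swap (0 : Fin 3) 2) = ![1,1,0] := by decide
        rw [e] at h
        exact h
      have hs : Real.sqrt 3 * Real.sqrt 3 = 3 := Real.mul_self_sqrt (by norm_num)
      have eq1 := congrFun hQ ![0,0,0]
      have eq2 := congrFun hQ ![1,1,1]
      rw [tpow3_apply] at eq1 eq2
      simp only [Matrix.cons_val_zero, Matrix.cons_val_one, Matrix.head_cons, Matrix.cons_val_two,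
        Matrix.tail_cons, Q00, Q01, Q10, Q11] at eq1 eq2
      rw [s010, s100, s101, s110] at eq1 eq2
      have E1 : 3*(A ![0,0,0] + A ![0,1,1]) + Real.sqrt 3*(A ![0,0,1] + A ![1,1,1]) = 0 := by
        linear_combination (-8/3)*eq1 - (A ![0,1,1] + Real.sqrt 3 * A ![1,1,1]/3)*hs
      have E2 : Real.sqrt 3*(A ![0,0,0] + A ![0,1,1]) - 3*(A ![0,0,1] + A ![1,1,1]) = 0 := by
        linear_combination (8/3)*eq2 - (Real.sqrt 3 * A ![0,0,0]/3 - A ![0,0,1])*hs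
      have h011 : A ![0,1,1] = -A ![0,0,0] := by
        linear_combination (Real.sqrt 3/12)*E2 + (1/4)*E1 - ((A ![0,0,0] + A ![0,1,1])/12)*hs
      have h001 : A ![0,0,1] = -A ![1,1,1] := by
        linear_combination (Real.sqrt 3/12)*E1 - (1/4)*E2 - ((A ![0,0,1] + A ![1,1,1])/12)*hs
      refine ⟨A ![0,0,0], A ![1,1,1], ?_⟩
      funext l
      have hl : l = ![l 0, l 1, l 2] := by funext i; fin_cases i <;> rfl
      rcases show l 0 = 0 ∨ l 0 = 1 from by omega with h0|h0 <;>
      rcases show l 1 = 0 ∨ l 1 = 1 from by omega with h1|h1 <;>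
      rcases show l 2 = 0 ∨ l 2 = 1 from by omega with h2|h2 <;>
      rw [h0, h1, h2] at hl <;> rw [hl] <;>
      simp only [Pi.add_apply, Pi.smul_apply, smul_eq_mul, T1v0, T1v1, T1v2, T1v3, T1v4, T1v5,
        T1v6, T1v7, T2v0, T2v1, T2v2, T2v3, T2v4, T2v5, T2v6, T2v7] <;>
      linarith [s010, s100, s101, s110, h011, h001]
    · rintro ⟨c, d, rfl⟩
      constructor
      · rw [tpow3_lin, tpow3_T1, tpow3_T2]
      · rw [sym3_lin, sym3_T1, sym3_T2]
  · rw [linearIndependent_fin2]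
    constructor
    · intro h
      have h' : T2 = 0 := by simpa using h
      have := congrFun h' ![1,1,1]
      rw [T2v7] at this
      simp at this
    · intro a h
      have h' : a • T2 = T1 := by simpa using h
      have := congrFun h' ![0,0,0]
      rw [Pi.smul_apply, T2v0, T1v0, smul_eq_mul] at this
      simp at this
end

section
/- Let $\ensuremath{\mathcal{R}} \subset \mathbb{R}^2\setminus\{0\}$ be finite with $Q\ensuremath{\mathcal{R}} = \ensuremath{\mathcal{R}}$ for $Q$ a rotation by $2\pi/3$ or $\pi/2$, and let $H \in \mathbb{R}^{\ensuremath{\mathcal{R}}\times\ensuremath{\mathcal{R}}}$ be symmetric with $H_{\rho\sigma} = H_{Q\rho\, Q\sigma}$ for all $\rho,\sigma$. Then the matrix $M = \sum_{\rho,\sigma\in\ensuremath{\mathcal{R}}} H_{\rho\sigma}\,\rho\otimes\sigma$ is a scalar multiple of the identity: $M = \big(\frac{1}{2}\sum_{\rho,\sigma} H_{\rho\sigma}\,\rho\cdot\sigma\big)\mathrm{Id}$. -/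
open Finset Matrix

def Qquad : Matrix (Fin 2) (Fin 2) ℝ := !![0, -1; 1, 0]


lemma vecMulVec_conj (Q : Matrix (Fin 2) (Fin 2) ℝ) (ρ σ : Fin 2 → ℝ) :
    vecMulVec (Q.mulVec ρ) (Q.mulVec σ) = Q * vecMulVec ρ σ * Qᵀ := by
  ext i j
  fin_cases i <;> fin_cases j <;>
  simp [vecMulVec_apply, Matrix.mul_apply, Matrix.mulVec, dotProduct,
    Fin.sum_univ_succ, transpose_apply] <;>
  ring

lemma rot_inv (Q : Matrix (Fin 2) (Fin 2) ℝ) (hQ : Q = Qtri ∨ Q = Qquad)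
    (M : Matrix (Fin 2) (Fin 2) ℝ) (hsym : M 0 1 = M 1 0)
    (hinv : Q * M * Qᵀ = M) :
    M = ((1/2 : ℝ) * (M 0 0 + M 1 1)) • 1 := by
  have h3 : Real.sqrt 3 * Real.sqrt 3 = 3 := Real.mul_self_sqrt (by norm_num)
  rcases hQ with rfl | rfl
  · have h00 := congrFun (congrFun hinv 0) 0
    have h01 := congrFun (congrFun hinv 0) 1
    simp [Qtri, Matrix.mul_apply, Matrix.vecMul, dotProduct, Matrix.vecHead,
      Matrix.vecTail, Fin.sum_univ_succ, transpose_apply] at h00 h01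
    have step1 : Real.sqrt 3 * (M 0 0 - M 1 1) = -6 * M 0 1 := by
      linear_combination (-4) * h01 + 3 * hsym - M 1 0 * h3
    have step2 : 2 * Real.sqrt 3 * M 0 1 = 3 * (M 0 0 - M 1 1) := by
      linear_combination 4 * h00 + Real.sqrt 3 * hsym - M 1 1 * h3
    have ha : M 0 0 = M 1 1 := by
      linear_combination (Real.sqrt 3 / 12) * step1 - (1/4) * step2
        - ((M 0 0 - M 1 1)/12) * h3
    have hb : M 0 1 = 0 := by
      linear_combination (1/6) * step1 - (Real.sqrt 3 / 6) * ha
    ext i j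
    fin_cases i <;> fin_cases j <;>
      simp [Matrix.one_apply, Matrix.smul_apply, smul_eq_mul] <;>
      linarith [ha, hb, hsym]
  · have h00 := congrFun (congrFun hinv 0) 0
    have h01 := congrFun (congrFun hinv 0) 1
    simp [Qquad, Matrix.mul_apply, Matrix.vecMul, dotProduct, Matrix.vecHead,
      Matrix.vecTail, Fin.sum_univ_succ, transpose_apply] at h00 h01
    ext i j
    fin_cases i <;> fin_cases j <;>
      simp [Matrix.one_apply, Matrix.smul_apply, smul_eq_mul] <;>
      linarith [h00, h01, hsym]

lemma Q_orth (Q : Matrix (Fin 2) (Fin 2) ℝ) (hQ : Q = Qtri ∨ Q = Qquad) :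
    Qᵀ * Q = 1 := by
  have h3 : Real.sqrt 3 * Real.sqrt 3 = 3 := Real.mul_self_sqrt (by norm_num)
  rcases hQ with rfl | rfl <;>
  · ext i j
    fin_cases i <;> fin_cases j <;>
      simp [Qtri, Qquad, Matrix.mul_apply, Fin.sum_univ_succ, transpose_apply,
        Matrix.one_apply] <;>
      nlinarith [h3]

theorem stmt5 (Q : Matrix (Fin 2) (Fin 2) ℝ) (hQ : Q = Qtri ∨ Q = Qquad)
    (R : Finset (Fin 2 → ℝ)) (h0 : (0 : Fin 2 → ℝ) ∉ R)
    (hQR : R.image Q.mulVec = R)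
    (H : (Fin 2 → ℝ) → (Fin 2 → ℝ) → ℝ)
    (hHsym : ∀ ρ σ, H ρ σ = H σ ρ)
    (hHrot : ∀ ρ σ, H ρ σ = H (Q.mulVec ρ) (Q.mulVec σ)) :
    ∑ ρ ∈ R, ∑ σ ∈ R, H ρ σ • Matrix.vecMulVec ρ σ
      = ((1/2 : ℝ) * ∑ ρ ∈ R, ∑ σ ∈ R, H ρ σ * (ρ ⬝ᵥ σ)) •
          (1 : Matrix (Fin 2) (Fin 2) ℝ) := by
  have hQtQ : Qᵀ * Q = 1 := Q_orth Q hQ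
  have hinj : Function.Injective Q.mulVec := by
    intro x y hxy
    have h := congrArg Qᵀ.mulVec hxy
    rwa [Matrix.mulVec_mulVec, Matrix.mulVec_mulVec, hQtQ, Matrix.one_mulVec,
      Matrix.one_mulVec] at h
  have hrein : ∀ (f : (Fin 2 → ℝ) → Matrix (Fin 2) (Fin 2) ℝ),
      ∑ ρ ∈ R, f ρ = ∑ ρ ∈ R, f (Q.mulVec ρ) := by
    intro f
    conv_lhs => rw [← hQR]
    exact Finset.sum_image fun x _ y _ h => hinj h
  set M : Matrix (Fin 2) (Fin 2) ℝ :=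
    ∑ ρ ∈ R, ∑ σ ∈ R, H ρ σ • Matrix.vecMulVec ρ σ with hMdef
  have hvv : ∀ ρ σ : Fin 2 → ℝ,
      vecMulVec (Q.mulVec ρ) (Q.mulVec σ) = Q * vecMulVec ρ σ * Qᵀ :=
    vecMulVec_conj Q
  have hinv : Q * M * Qᵀ = M := by
    rw [hMdef]
    conv_rhs => rw [hrein (fun ρ => ∑ σ ∈ R, H ρ σ • Matrix.vecMulVec ρ σ)]
    rw [Matrix.mul_sum, Matrix.sum_mul]
    refine Finset.sum_congr rfl fun ρ _ => ?_
    rw [Matrix.mul_sum, Matrix.sum_mul,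
      hrein (fun σ => H (Q.mulVec ρ) σ • Matrix.vecMulVec (Q.mulVec ρ) σ)]
    refine Finset.sum_congr rfl fun σ _ => ?_
    rw [← hHrot, hvv, mul_smul_comm, smul_mul_assoc, Matrix.mul_assoc]
  have hsym : M 0 1 = M 1 0 := by
    simp only [hMdef, Matrix.sum_apply, Matrix.smul_apply, vecMulVec_apply,
      smul_eq_mul]
    rw [Finset.sum_comm]
    exact Finset.sum_congr rfl fun ρ _ => Finset.sum_congr rfl fun σ _ => by
      rw [hHsym]; ring
  have key := rot_inv Q hQ M hsym hinv
  have htr : ∑ ρ ∈ R, ∑ σ ∈ R, H ρ σ * (ρ ⬝ᵥ σ) = M 0 0 + M 1 1 := by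
    simp only [hMdef, Matrix.sum_apply, Matrix.smul_apply, vecMulVec_apply,
      smul_eq_mul, ← Finset.sum_add_distrib]
    refine Finset.sum_congr rfl fun ρ _ => ?_
    refine Finset.sum_congr rfl fun σ _ => ?_
    simp [dotProduct, Fin.sum_univ_succ]
    ring
  rw [htr]
  exact key
end
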